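/- Let L be a symmetric Leibniz algebra over a field F. Then L² = span{[x,y] : x, y ∈ L} with the restricted bracket is a Lie algebra; in particular [a,a] = 0 for every a ∈ L². -/
import Mathlib


/-- `L² = span {[x,y] : x, y ∈ L}`. -/
def algSquare {F L : Type*} [Field F] [AddCommGroup L] [Module F L]
    (br : L →ₗ[F] L →ₗ[F] L) : Submodule F L :=
  Submodule.span F {w : L | ∃ x y : L, w = br x y}

/-- If `L` is a symmetric Leibniz algebra then `L²` with the restricted
bracket is a Lie algebra: it is closed under the bracket, `[a,a] = 0` for
every `a ∈ L²`, and the Jacobi identity holds on `L²`. -/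
theorem stmt_17 (F : Type*) [Field F]
    (L : Type*) [AddCommGroup L] [Module F L]
    (br : L →ₗ[F] L →ₗ[F] L)
    (hright : ∀ x y z : L, br x (br y z) = br (br x y) z - br (br x z) y)
    (hleft : ∀ x y z : L, br x (br y z) = br (br x y) z + br y (br x z))
    (hsq : ∀ x y : L, br (br x y) (br x y) = 0) :
    (∀ a ∈ algSquare br, ∀ b ∈ algSquare br, br a b ∈ algSquare br) ∧
      (∀ a ∈ algSquare br, br a a = 0) ∧
      (∀ a ∈ algSquare br, ∀ b ∈ algSquare br, ∀ c ∈ algSquare br,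
        br (br a b) c + br (br b c) a + br (br c a) b = 0) := by
  -- for generators: br b (br x y) = - br (br x y) b
  have hgen : ∀ b x y : L, br b (br x y) = - br (br x y) b := by
    intro b x y
    have h1 := hright x b y
    have h2 := hleft x b y
    have h3 := h1.symm.trans h2
    rw [sub_eq_add_neg] at h3
    exact (add_left_cancel h3).symm
  -- antisymmetry against elements of the span
  have anti : ∀ a ∈ algSquare br, ∀ b : L, br a b = - br b a := by
    intro a ha
    induction ha using Submodule.span_induction with
    | mem w hw =>
      obtain ⟨x, y, rfl⟩ := hw
      intro b
      rw [hgen b x y, neg_neg]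
    | zero => intro b; simp
    | add u v hu hv ihu ihv =>
      intro b
      simp only [map_add, LinearMap.add_apply, ihu b, ihv b]
      abel
    | smul c u hu ihu =>
      intro b
      simp only [map_smul, LinearMap.smul_apply, LinearMap.map_smul, ihu b, smul_neg]
  have genmem : ∀ x y : L, br x y ∈ algSquare br := fun x y =>
    Submodule.subset_span ⟨x, y, rfl⟩
  refine ⟨?_, ?_, ?_⟩
  · -- closure
    intro a _ b hb
    induction hb using Submodule.span_induction with
    | mem w hw =>
      obtain ⟨x, y, rfl⟩ := hw
      rw [hright a x y]
      exact sub_mem (genmem _ _) (genmem _ _)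
    | zero => simp [Submodule.zero_mem]
    | add u v hu hv ihu ihv => rw [map_add]; exact add_mem ihu ihv
    | smul c u hu ihu => rw [map_smul]; exact Submodule.smul_mem _ _ ihu
  · -- squares vanish
    intro a ha
    induction ha using Submodule.span_induction with
    | mem w hw => obtain ⟨x, y, rfl⟩ := hw; exact hsq x y
    | zero => simp
    | add u v hu hv ihu ihv =>
      have h := anti u hu v
      simp only [map_add, LinearMap.add_apply, ihu, ihv, h]
      abel
    | smul c u hu ihu =>
      simp only [map_smul, LinearMap.smul_apply, LinearMap.map_smul, ihu, smul_zero]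
  · -- Jacobi
    intro a ha b _ c hc
    have h1 := hright a b c
    have h2 : br a (br b c) = - br (br b c) a := anti a ha (br b c)
    have h4 : br a c = - br c a := by rw [anti c hc a, neg_neg]
    rw [h2, h4, map_neg, LinearMap.neg_apply, sub_neg_eq_add] at h1
    calc br (br a b) c + br (br b c) a + br (br c a) b
        = (br (br a b) c + br (br c a) b) + br (br b c) a := by abel
      _ = -br (br b c) a + br (br b c) a := by rw [← h1]
      _ = 0 := by abel
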